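/- Let ψ : T → S be a surjective idempotent separating homomorphism of inverse semigroups with kernel K = ⊔_{e ∈ E(T)} K_e (a union of groups indexed by the idempotents of T). Then for k ∈ K_e and s ∈ S, the element t⁻¹kt is independent of the choice of t ∈ T with ψ(t) = s, up to conjugacy; precisely, if ψ(t₁) = ψ(t₂) = s then the images of t₁⁻¹kt₁ and t₂⁻¹kt₂ in the abelianization K_{t₁⁻¹et₁}^{ab} coincide (note t₁⁻¹et₁ = t₂⁻¹et₂). -/
import Mathlib


class InverseSemigroup (S : Type*) extends Semigroup S, Inv S where
  mul_inv_mul : ∀ a : S, a * a⁻¹ * a = a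
  inv_mul_inv : ∀ a : S, a⁻¹ * a * a⁻¹ = a⁻¹
  idem_comm : ∀ e f : S, e * e = e → f * f = f → e * f = f * e

/-- The component `K_f` of the kernel of `ψ` at the idempotent `f`:
elements mapping to an idempotent, with `a * a⁻¹ = f`. -/
def kerComp {T S : Type*} [InverseSemigroup T] [InverseSemigroup S]
    (ψ : T → S) (f : T) : Set T :=
  {a : T | ψ a * ψ a = ψ a ∧ a * a⁻¹ = f}

/-- The sub-semigroup of products of commutators of elements of `K_f`; two elements of
`K_f` have the same image in the abelianization `K_f^{ab}` iff the product of one with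
the inverse of the other lies in this set. -/
def commClosure {T S : Type*} [InverseSemigroup T] [InverseSemigroup S]
    (ψ : T → S) (f : T) : Subsemigroup T :=
  Subsemigroup.closure
    {x : T | ∃ a ∈ kerComp ψ f, ∃ b ∈ kerComp ψ f, x = a * b * a⁻¹ * b⁻¹}

namespace ISG

variable {T : Type*} [InverseSemigroup T]

lemma mia (a : T) : a * a⁻¹ * a = a := InverseSemigroup.mul_inv_mul a
lemma imi (a : T) : a⁻¹ * a * a⁻¹ = a⁻¹ := InverseSemigroup.inv_mul_inv a
lemma icomm {e f : T} (he : e * e = e) (hf : f * f = f) : e * f = f * e :=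
  InverseSemigroup.idem_comm e f he hf

lemma rw1 {x y z : T} (h : x * y = z) (w : T) : x * (y * w) = z * w := by
  rw [← mul_assoc, h]

lemma rw2 {x y : T} (h : x * y = y * x) (w : T) : x * (y * w) = y * (x * w) := by
  rw [← mul_assoc, h, mul_assoc]

lemma mul_inv_idem (a : T) : (a * a⁻¹) * (a * a⁻¹) = a * a⁻¹ := by
  rw [← mul_assoc, mia]

lemma inv_mul_idem (a : T) : (a⁻¹ * a) * (a⁻¹ * a) = a⁻¹ * a := by
  rw [← mul_assoc, imi]

lemma idem_mul_idem {x y : T} (hx : x * x = x) (hy : y * y = y) :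
    (x * y) * (x * y) = x * y := by
  calc (x * y) * (x * y) = x * ((y * x) * y) := by simp only [mul_assoc]
  _ = x * ((x * y) * y) := by rw [icomm hy hx]
  _ = (x * x) * (y * y) := by simp only [mul_assoc]
  _ = x * y := by rw [hx, hy]

lemma inv_eq {a x y : T} (hx1 : a * x * a = a) (hx2 : x * a * x = x)
    (hy1 : a * y * a = a) (hy2 : y * a * y = y) : x = y := by
  have hxa : x * a * (x * a) = x * a := by rw [← mul_assoc, hx2]
  have hya : y * a * (y * a) = y * a := by rw [← mul_assoc, hy2]
  have hax : a * x * (a * x) = a * x := by rw [← mul_assoc, hx1]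
  have hay : a * y * (a * y) = a * y := by rw [← mul_assoc, hy1]
  have h5 : x = y * a * x := by
    conv_lhs => rw [← hx2, ← hy1]
    calc x * (a * y * a) * x = (x * a) * (y * a) * x := by simp only [mul_assoc]
    _ = (y * a) * (x * a) * x := by rw [icomm hxa hya]
    _ = y * a * x := by rw [mul_assoc (y*a), hx2]
  have h6 : y = x * a * y := by
    conv_lhs => rw [← hy2, ← hx1]
    calc y * (a * x * a) * y = (y * a) * (x * a) * y := by simp only [mul_assoc]
    _ = (x * a) * (y * a) * y := by rw [icomm hya hxa]
    _ = x * a * y := by rw [mul_assoc (x*a), hy2]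
  calc x = y * a * x := h5
  _ = x * a * y * a * x := by rw [← h6]
  _ = x * (a * y) * (a * x) := by simp only [mul_assoc]
  _ = x * (a * x) * (a * y) := by
        rw [mul_assoc x (a*y) (a*x), icomm hay hax, ← mul_assoc]
  _ = (x * a * x) * (a * y) := by simp only [mul_assoc]
  _ = x * a * y := by rw [hx2, ← mul_assoc]
  _ = y := h6.symm

lemma inv_inv (a : T) : a⁻¹⁻¹ = a :=
  (inv_eq (imi a) (mia a) (mia a⁻¹) (imi a⁻¹)).symm

lemma mul_inv_rev (a b : T) : (a * b)⁻¹ = b⁻¹ * a⁻¹ := by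
  refine (inv_eq ?_ ?_ (mia (a*b)) (imi (a*b))).symm
  · calc a * b * (b⁻¹ * a⁻¹) * (a * b)
        = a * ((b * b⁻¹) * ((a⁻¹ * a) * b)) := by simp only [mul_assoc]
    _ = a * ((a⁻¹ * a) * ((b * b⁻¹) * b)) := by
          rw [rw2 (icomm (mul_inv_idem b) (inv_mul_idem a))]
    _ = a * a⁻¹ * a * (b * b⁻¹ * b) := by simp only [mul_assoc]
    _ = a * b := by rw [mia, mia]
  · calc b⁻¹ * a⁻¹ * (a * b) * (b⁻¹ * a⁻¹)
        = b⁻¹ * ((a⁻¹ * a) * ((b * b⁻¹) * a⁻¹)) := by simp only [mul_assoc]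
    _ = b⁻¹ * ((b * b⁻¹) * ((a⁻¹ * a) * a⁻¹)) := by
          rw [rw2 (icomm (inv_mul_idem a) (mul_inv_idem b))]
    _ = b⁻¹ * b * b⁻¹ * (a⁻¹ * a * a⁻¹) := by simp only [mul_assoc]
    _ = b⁻¹ * a⁻¹ := by rw [imi, imi]

lemma idem_inv {e : T} (he : e * e = e) : e⁻¹ = e := by
  have h : e * e * e = e := by rw [he, he]
  exact (inv_eq h h (mia e) (imi e)).symm

lemma conj_idem {t e : T} (he : e * e = e) :
    (t⁻¹ * e * t) * (t⁻¹ * e * t) = t⁻¹ * e * t := by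
  calc (t⁻¹ * e * t) * (t⁻¹ * e * t)
      = t⁻¹ * (e * ((t * t⁻¹) * (e * t))) := by simp only [mul_assoc]
  _ = t⁻¹ * ((t * t⁻¹) * (e * (e * t))) := by rw [rw2 (icomm he (mul_inv_idem t))]
  _ = t⁻¹ * ((t * t⁻¹) * ((e * e) * t)) := by rw [← mul_assoc e e t]
  _ = (t⁻¹ * t * t⁻¹) * (e * t) := by rw [he]; simp only [mul_assoc]
  _ = t⁻¹ * e * t := by rw [imi, ← mul_assoc]

section Hom
variable {U : Type*} [InverseSemigroup U] (ψ : T → U)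

lemma map_inv (hmul : ∀ a b : T, ψ (a * b) = ψ a * ψ b) (a : T) :
    ψ a⁻¹ = (ψ a)⁻¹ := by
  refine inv_eq ?_ ?_ (mia (ψ a)) (imi (ψ a))
  · rw [← hmul, ← hmul, mia]
  · rw [← hmul, ← hmul, imi]

lemma conj_indep (hmul : ∀ a b : T, ψ (a * b) = ψ a * ψ b)
    (hsep : ∀ e f : T, e * e = e → f * f = f → ψ e = ψ f → e = f)
    {t₁ t₂ e : T} (ht : ψ t₁ = ψ t₂) (he : e * e = e) :
    t₁⁻¹ * e * t₁ = t₂⁻¹ * e * t₂ := by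
  refine hsep _ _ (conj_idem he) (conj_idem he) ?_
  rw [hmul, hmul, hmul, hmul, map_inv ψ hmul, map_inv ψ hmul, ht]

lemma ker_comm (hmul : ∀ a b : T, ψ (a * b) = ψ a * ψ b)
    (hsep : ∀ e f : T, e * e = e → f * f = f → ψ e = ψ f → e = f)
    {k g : T} (hk : ψ k * ψ k = ψ k) (hg : g * g = g) : k * g = g * k := by
  have hψg : ψ g * ψ g = ψ g := by rw [← hmul, hg]
  have hψk' : ψ k⁻¹ = ψ k := by rw [map_inv ψ hmul, idem_inv hk]
  have h1 : k * g * k⁻¹ = g * (k * k⁻¹) := by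
    refine hsep _ _ ?_ (idem_mul_idem hg (mul_inv_idem k)) ?_
    · calc (k * g * k⁻¹) * (k * g * k⁻¹)
          = k * (g * ((k⁻¹ * k) * (g * k⁻¹))) := by simp only [mul_assoc]
      _ = k * (g * (g * ((k⁻¹ * k) * k⁻¹))) := by
            rw [rw2 (icomm (inv_mul_idem k) hg)]
      _ = k * ((g * g) * (k⁻¹ * k * k⁻¹)) := by simp only [mul_assoc]
      _ = k * g * k⁻¹ := by rw [hg, imi, ← mul_assoc]
    · rw [hmul, hmul, hmul, hmul, hψk']
      calc ψ k * ψ g * ψ k = ψ g * ψ k * ψ k := by rw [icomm hk hψg]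
      _ = ψ g * (ψ k * ψ k) := by rw [mul_assoc]
      _ = ψ g * ψ k := by rw [hk]
      _ = ψ g * (ψ k * ψ k) := by rw [hk]
  calc k * g = k * (k⁻¹ * k) * g := by rw [← mul_assoc, mia]
  _ = k * ((k⁻¹ * k) * g) := by rw [mul_assoc]
  _ = k * (g * (k⁻¹ * k)) := by rw [icomm (inv_mul_idem k) hg]
  _ = (k * g * k⁻¹) * k := by simp only [mul_assoc]
  _ = (g * (k * k⁻¹)) * k := by rw [h1]
  _ = g * (k * k⁻¹ * k) := by simp only [mul_assoc]
  _ = g * k := by rw [mia]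

lemma ker_mul_inv_comm (hmul : ∀ a b : T, ψ (a * b) = ψ a * ψ b)
    (hsep : ∀ e f : T, e * e = e → f * f = f → ψ e = ψ f → e = f)
    {m : T} (hm : ψ m * ψ m = ψ m) : m * m⁻¹ = m⁻¹ * m := by
  have h1 : m * (m⁻¹ * m) = (m⁻¹ * m) * m :=
    ker_comm ψ hmul hsep hm (inv_mul_idem m)
  have h2 : m * (m * m⁻¹) = (m * m⁻¹) * m :=
    ker_comm ψ hmul hsep hm (mul_inv_idem m)
  have e1 : (m⁻¹ * m) * (m * m⁻¹) = m * m⁻¹ := by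
    calc (m⁻¹ * m) * (m * m⁻¹) = ((m⁻¹ * m) * m) * m⁻¹ := by rw [← mul_assoc]
    _ = (m * (m⁻¹ * m)) * m⁻¹ := by rw [← h1]
    _ = (m * m⁻¹ * m) * m⁻¹ := by rw [← mul_assoc]
    _ = m * m⁻¹ := by rw [mia]
  have e2 : (m⁻¹ * m) * (m * m⁻¹) = m⁻¹ * m := by
    calc (m⁻¹ * m) * (m * m⁻¹) = m⁻¹ * (m * (m * m⁻¹)) := by simp only [mul_assoc]
    _ = m⁻¹ * (m * m⁻¹ * m) := by rw [h2]
    _ = m⁻¹ * m := by rw [mia]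
  exact e1.symm.trans e2

end Hom
end ISG

open ISG

/-- for a surjective idempotent separating `ψ : T → S`, `k ∈ K_e` and two
lifts `t₁, t₂` of `s ∈ S`, we have `t₁⁻¹et₁ = t₂⁻¹et₂` and the images of `t₁⁻¹kt₁` and
`t₂⁻¹kt₂` in the abelianization `K_{t₁⁻¹et₁}^{ab}` coincide (expressed as:
`(t₁⁻¹kt₁)(t₂⁻¹kt₂)⁻¹` is a product of commutators of elements of `K_{t₁⁻¹et₁}`). -/
theorem stmt4 {T S : Type*} [InverseSemigroup T] [InverseSemigroup S] (ψ : T → S)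
    (hmul : ∀ a b : T, ψ (a * b) = ψ a * ψ b)
    (hsurj : Function.Surjective ψ)
    (hsep : ∀ e f : T, e * e = e → f * f = f → ψ e = ψ f → e = f)
    (e : T) (he : e * e = e) (k : T) (hk : k ∈ kerComp ψ e)
    (s : S) (t₁ t₂ : T) (h₁ : ψ t₁ = s) (h₂ : ψ t₂ = s) :
    t₁⁻¹ * e * t₁ = t₂⁻¹ * e * t₂ ∧
    (t₁⁻¹ * k * t₁) * (t₂⁻¹ * k⁻¹ * t₂) ∈ commClosure ψ (t₁⁻¹ * e * t₁) := by
  obtain ⟨hk1, hk2⟩ := hk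
  have hte : ψ t₁ = ψ t₂ := by rw [h₁, h₂]
  refine ⟨ISG.conj_indep ψ hmul hsep hte he, ?_⟩
  have hti : ψ t₁⁻¹ = ψ t₂⁻¹ := by rw [ISG.map_inv ψ hmul, ISG.map_inv ψ hmul, hte]
  obtain ⟨m, hmdef⟩ : ∃ m : T, m = t₁ * t₂⁻¹ := ⟨_, rfl⟩
  have hmker : ψ m * ψ m = ψ m := by
    rw [hmdef, hmul, ISG.map_inv ψ hmul, h₁, h₂]; exact ISG.mul_inv_idem s
  have hψmi : ψ m⁻¹ * ψ m⁻¹ = ψ m⁻¹ := by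
    rw [ISG.map_inv ψ hmul, ISG.idem_inv hmker]; exact hmker
  have hψki : ψ k⁻¹ * ψ k⁻¹ = ψ k⁻¹ := by
    rw [ISG.map_inv ψ hmul, ISG.idem_inv hk1]; exact hk1
  have hψe : ψ e * ψ e = ψ e := by rw [← hmul, he]
  have hgg : (t₁ * t₁⁻¹) * (t₁ * t₁⁻¹) = t₁ * t₁⁻¹ := ISG.mul_inv_idem t₁
  have hmm1 : m * m⁻¹ = t₂ * t₂⁻¹ := by
    have step : t₁ * (t₂⁻¹ * t₂) * t₁⁻¹ = t₂ * (t₂⁻¹ * t₂) * t₂⁻¹ := by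
      have := ISG.conj_indep ψ hmul hsep hti (ISG.inv_mul_idem t₂)
      rwa [ISG.inv_inv, ISG.inv_inv] at this
    calc m * m⁻¹ = t₁ * t₂⁻¹ * (t₂ * t₁⁻¹) := by rw [hmdef, ISG.mul_inv_rev, ISG.inv_inv]
    _ = t₁ * (t₂⁻¹ * t₂) * t₁⁻¹ := by simp only [mul_assoc]
    _ = t₂ * (t₂⁻¹ * t₂) * t₂⁻¹ := step
    _ = (t₂ * t₂⁻¹) * (t₂ * t₂⁻¹) := by simp only [mul_assoc]
    _ = t₂ * t₂⁻¹ := ISG.mul_inv_idem t₂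
  have hmm2 : m⁻¹ * m = t₁ * t₁⁻¹ := by
    have step : t₂ * (t₁⁻¹ * t₁) * t₂⁻¹ = t₁ * (t₁⁻¹ * t₁) * t₁⁻¹ := by
      have := ISG.conj_indep ψ hmul hsep hti.symm (ISG.inv_mul_idem t₁)
      rwa [ISG.inv_inv, ISG.inv_inv] at this
    calc m⁻¹ * m = t₂ * t₁⁻¹ * (t₁ * t₂⁻¹) := by rw [hmdef, ISG.mul_inv_rev, ISG.inv_inv]
    _ = t₂ * (t₁⁻¹ * t₁) * t₂⁻¹ := by simp only [mul_assoc]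
    _ = t₁ * (t₁⁻¹ * t₁) * t₁⁻¹ := step
    _ = (t₁ * t₁⁻¹) * (t₁ * t₁⁻¹) := by simp only [mul_assoc]
    _ = t₁ * t₁⁻¹ := ISG.mul_inv_idem t₁
  have hg0 : m * m⁻¹ = t₁ * t₁⁻¹ :=
    (ISG.ker_mul_inv_comm ψ hmul hsep hmker).trans hmm2
  have he0 : t₂ * t₂⁻¹ = t₁ * t₁⁻¹ := hmm1.symm.trans hg0
  have hg1 : t₁⁻¹ * t₁ = t₂⁻¹ * t₂ := by
    calc t₁⁻¹ * t₁ = (t₁⁻¹ * t₁) * (t₁⁻¹ * t₁) := (ISG.inv_mul_idem t₁).symm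
    _ = t₁⁻¹ * (t₁ * t₁⁻¹) * t₁ := by simp only [mul_assoc]
    _ = t₂⁻¹ * (t₁ * t₁⁻¹) * t₂ := ISG.conj_indep ψ hmul hsep hte (ISG.mul_inv_idem t₁)
    _ = t₂⁻¹ * (t₂ * t₂⁻¹) * t₂ := by rw [he0]
    _ = (t₂⁻¹ * t₂) * (t₂⁻¹ * t₂) := by simp only [mul_assoc]
    _ = t₂⁻¹ * t₂ := ISG.inv_mul_idem t₂
  have hminv : m⁻¹ = t₂ * t₁⁻¹ := by rw [hmdef, ISG.mul_inv_rev, ISG.inv_inv]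
  have ht2 : t₂ = m⁻¹ * t₁ := by rw [hminv, mul_assoc, hg1, ← mul_assoc, ISG.mia]
  have ht2i : t₂⁻¹ = t₁⁻¹ * m := by rw [hmdef, ← mul_assoc, hg1, ISG.imi]
  -- pointwise rewrite rules
  have hk'k : k⁻¹ * k = e := (ISG.ker_mul_inv_comm ψ hmul hsep hk1).symm.trans hk2
  have hek : e * k = k := by rw [← hk2, ISG.mia]
  have hke : k * e = k := by rw [← hk'k, ← mul_assoc, ISG.mia]
  have hk'e : k⁻¹ * e = k⁻¹ := by rw [← hk2, ← mul_assoc, ISG.imi]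
  have hek' : e * k⁻¹ = k⁻¹ := by rw [← hk'k, ISG.imi]
  have hkg : k * (t₁ * t₁⁻¹) = (t₁ * t₁⁻¹) * k := ISG.ker_comm ψ hmul hsep hk1 hgg
  have hk'g : k⁻¹ * (t₁ * t₁⁻¹) = (t₁ * t₁⁻¹) * k⁻¹ := ISG.ker_comm ψ hmul hsep hψki hgg
  have hem : e * m = m * e := (ISG.ker_comm ψ hmul hsep hmker he).symm
  have hem' : e * m⁻¹ = m⁻¹ * e := (ISG.ker_comm ψ hmul hsep hψmi he).symm
  have hgm : (t₁ * t₁⁻¹) * m = m := by rw [← hg0, ISG.mia]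
  have hgm' : (t₁ * t₁⁻¹) * m⁻¹ = m⁻¹ := by rw [← hmm2, ISG.imi]
  have hainv : (t₁⁻¹ * k * t₁)⁻¹ = t₁⁻¹ * k⁻¹ * t₁ := by
    rw [ISG.mul_inv_rev, ISG.mul_inv_rev, ISG.inv_inv, ← mul_assoc]
  have hcinv : (t₁⁻¹ * (e * m) * t₁)⁻¹ = t₁⁻¹ * (m⁻¹ * e) * t₁ := by
    rw [ISG.mul_inv_rev, ISG.mul_inv_rev, ISG.inv_inv, ISG.mul_inv_rev, ISG.idem_inv he, ← mul_assoc]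
  have ha : t₁⁻¹ * k * t₁ ∈ kerComp ψ (t₁⁻¹ * e * t₁) := by
    refine ⟨?_, ?_⟩
    · rw [hmul, hmul, ISG.map_inv ψ hmul]; exact ISG.conj_idem hk1
    · rw [hainv]
      simp only [mul_assoc]
      simp only [← mul_assoc t₁ t₁⁻¹]
      simp only [ISG.rw2 hkg, ISG.rw1 hk2, ISG.rw2 (ISG.icomm hgg he), ISG.mia]
  have hc : t₁⁻¹ * (e * m) * t₁ ∈ kerComp ψ (t₁⁻¹ * e * t₁) := by
    refine ⟨?_, ?_⟩
    · rw [hmul, hmul, ISG.map_inv ψ hmul]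
      exact ISG.conj_idem (by rw [hmul]; exact ISG.idem_mul_idem hψe hmker)
    · rw [hcinv]
      simp only [mul_assoc]
      simp only [← mul_assoc t₁ t₁⁻¹]
      simp only [ISG.rw1 hgm', ISG.rw1 hg0, ISG.rw2 (ISG.icomm hgg he), ISG.rw1 he, ISG.mia]
  refine Subsemigroup.subset_closure ⟨t₁⁻¹ * k * t₁, ha, t₁⁻¹ * (e * m) * t₁, hc, ?_⟩
  rw [hainv, hcinv, ht2i, ht2]
  simp only [mul_assoc]
  simp only [← mul_assoc t₁ t₁⁻¹]
  simp only [ISG.rw1 hgg, ISG.rw1 hgm, ISG.rw1 hgm', ISG.rw2 hk'g.symm, ISG.rw2 (ISG.icomm hgg he),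
    ISG.rw2 hem, ISG.rw2 hem'.symm, ISG.rw1 hk'e, ISG.rw1 hek', ISG.mia]
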